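/- Fix n ≥ 2, a ∈ (0,1), d > 0. Suppose u, v ∈ ℝⁿ satisfy G(u; a, d) = G(v; a, d) = 0 where G(w)_i = d(w_{i-1} - 2w_i + w_{i+1}) + g(w_i, a) with cyclic indices. If u ≤ v componentwise and u_i = v_i for some index i, then u = v. -/

import Mathlib

noncomputable section

/-- The cubic nonlinearity of the Nagumo equation. -/
def g (u a : ℝ) : ℝ := u * (1 - u) * (u - a)

/-- The `n`-periodic Nagumo equilibrium map, with cyclic indices. -/
def G (n : ℕ) [NeZero n] (a d : ℝ) (u : Fin n → ℝ) : Fin n → ℝ :=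
  fun i => d * (u (i - 1) - 2 * u i + u (i + 1)) + g (u i) a

theorem ordered_equilibria_agree (n : ℕ) [NeZero n] (hn : 2 ≤ n) (a d : ℝ)
    (ha : a ∈ Set.Ioo (0 : ℝ) 1) (hd : 0 < d) (u v : Fin n → ℝ)
    (hu : G n a d u = 0) (hv : G n a d v = 0) (hle : u ≤ v)
    (i : Fin n) (heq : u i = v i) : u = v := by
  have key : ∀ k : Fin n, u k = v k → u (k + 1) = v (k + 1) := by
    intro k hk
    have h1 : d * (u (k - 1) - 2 * u k + u (k + 1)) + g (u k) a = 0 := congrFun hu k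
    have h2 : d * (v (k - 1) - 2 * v k + v (k + 1)) + g (v k) a = 0 := congrFun hv k
    rw [hk] at h1
    have hl1 : u (k + 1) ≤ v (k + 1) := hle _
    have hl2 : u (k - 1) ≤ v (k - 1) := hle _
    nlinarith [mul_nonneg hd.le (sub_nonneg.2 hl1), mul_nonneg hd.le (sub_nonneg.2 hl2)]
  open Fin.NatCast in
  have hall : ∀ m : ℕ, u (i + (m : Fin n)) = v (i + (m : Fin n)) := by
    intro m
    induction m with
    | zero => simpa using heq
    | succ m ih =>
      have := key _ ih
      rwa [show ((m + 1 : ℕ) : Fin n) = (m : Fin n) + 1 by push_cast; ring, ← add_assoc]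
  funext j
  have := hall (j - i).val
  rwa [Fin.cast_val_eq_self, add_sub_cancel] at this
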